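/- An undirected graph G=(V,E) has a nowhere-zero four-flow if and only if the four-flow polynomial f_G := Π_{v∈V} (Π_{e∈δ(v)} x_e + 1)(Π_{e∈δ(v)} y_e + 1) does not belong to the ideal I_E = ideal{ x_e^2 − 1, y_e^2 − 1, (x_e+1)(y_e+1) : e ∈ E }. -/

import Mathlib

open MvPolynomial Finset

/-- The ideal `I_E` generated by `x_e² - 1`, `y_e² - 1`, `(x_e+1)(y_e+1)` for `e ∈ E`,
where `x_e = X (Sum.inl e)` and `y_e = X (Sum.inr e)`. -/
noncomputable def fourFlowIdeal (E : Type) : Ideal (MvPolynomial (E ⊕ E) ℂ) :=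
  Ideal.span
    ((Set.range fun e : E => (X (Sum.inl e) : MvPolynomial (E ⊕ E) ℂ) ^ 2 - 1) ∪
     (Set.range fun e : E => (X (Sum.inr e) : MvPolynomial (E ⊕ E) ℂ) ^ 2 - 1) ∪
     (Set.range fun e : E =>
       ((X (Sum.inl e) : MvPolynomial (E ⊕ E) ℂ) + 1) * (X (Sum.inr e) + 1)))

/-- The four-flow polynomial of an undirected (multi)graph given by endpoints map
`ends : E → Sym2 V`. -/
noncomputable def fourFlowPoly {V E : Type} [Fintype V] [Fintype E] [DecidableEq V]
    (ends : E → Sym2 V) : MvPolynomial (E ⊕ E) ℂ :=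
  ∏ v : V,
    ((∏ e ∈ univ.filter (fun e => v ∈ ends e),
        (X (Sum.inl e) : MvPolynomial (E ⊕ E) ℂ)) + 1) *
    ((∏ e ∈ univ.filter (fun e => v ∈ ends e),
        (X (Sum.inr e) : MvPolynomial (E ⊕ E) ℂ)) + 1)


section Cube
variable {σ : Type} [Fintype σ]

noncomputable def cubeSpan (σ : Type) : Ideal (MvPolynomial σ ℂ) :=
  Ideal.span (Set.range fun s : σ => (X s : MvPolynomial σ ℂ) ^ 2 - 1)

lemma eval_cubeSpan {x : σ → ℂ} (hx : ∀ i, x i = 1 ∨ x i = -1)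
    {p : MvPolynomial σ ℂ} (hp : p ∈ cubeSpan σ) : eval x p = 0 := by
  have hle : cubeSpan σ ≤ RingHom.ker (eval x) := by
    rw [cubeSpan, Ideal.span_le]
    rintro _ ⟨s, rfl⟩
    simp only [SetLike.mem_coe, RingHom.mem_ker, map_sub, map_pow, eval_X, map_one]
    rcases hx s with h | h <;> rw [h] <;> ring
  exact hle hp

lemma pow_reduce (a : σ) (k : ℕ) :
    (X a : MvPolynomial σ ℂ) ^ k - X a ^ (k % 2) ∈ cubeSpan σ := by
  obtain ⟨c, hc⟩ := sub_dvd_pow_sub_pow ((X a : MvPolynomial σ ℂ) ^ 2) 1 (k / 2)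
  have h1 : (X a : MvPolynomial σ ℂ) ^ k - X a ^ (k % 2)
      = X a ^ (k % 2) * (((X a : MvPolynomial σ ℂ) ^ 2) ^ (k / 2) - 1 ^ (k / 2)) := by
    rw [one_pow, mul_sub, mul_one, ← pow_mul, ← pow_add, Nat.mod_add_div]
  rw [h1, hc]
  exact Ideal.mul_mem_left _ _ (Ideal.mul_mem_right _ _ (Ideal.subset_span ⟨a, rfl⟩))

lemma prod_reduce (m : σ →₀ ℕ) (s : Finset σ) :
    (∏ i ∈ s, (X i : MvPolynomial σ ℂ) ^ m i) - ∏ i ∈ s, X i ^ (m i % 2) ∈ cubeSpan σ := by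
  classical
  induction s using Finset.cons_induction with
  | empty => simpa using Ideal.zero_mem _
  | cons a s ha ih =>
      rw [Finset.prod_cons, Finset.prod_cons]
      have heq : (X a : MvPolynomial σ ℂ) ^ m a * ∏ i ∈ s, X i ^ m i
            - X a ^ (m a % 2) * ∏ i ∈ s, X i ^ (m i % 2)
          = X a ^ m a * ((∏ i ∈ s, X i ^ m i) - ∏ i ∈ s, X i ^ (m i % 2))
            + ((X a : MvPolynomial σ ℂ) ^ m a - X a ^ (m a % 2)) * ∏ i ∈ s, X i ^ (m i % 2) := by
        ring
      rw [heq]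
      exact add_mem (Ideal.mul_mem_left _ _ ih) (Ideal.mul_mem_right _ _ (pow_reduce a (m a)))

lemma monomial_eq_prod (m : σ →₀ ℕ) (c : ℂ) :
    monomial m c = C c * ∏ i, (X i : MvPolynomial σ ℂ) ^ m i := by
  rw [monomial_eq]
  congr 1
  exact Finsupp.prod_fintype _ _ (fun i => pow_zero _)

lemma multilinear_eq_zero (g : MvPolynomial σ ℂ)
    (hml : ∀ m ∈ g.support, ∀ i, m i ≤ 1)
    (hv : ∀ x : σ → ℂ, (∀ i, x i = 1 ∨ x i = -1) → eval x g = 0) : g = 0 := by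
  classical
  ext m0
  simp only [coeff_zero]
  by_cases hm0 : ∀ i, m0 i ≤ 1
  · -- Fourier argument
    set xp : (σ → Bool) → σ → ℂ := fun ε i => if ε i then 1 else -1 with hxp
    have hcube : ∀ ε, ∀ i, xp ε i = 1 ∨ xp ε i = -1 := by
      intro ε i; by_cases h : ε i <;> simp [hxp, h]
    have key : (0 : ℂ) = ∑ ε : σ → Bool, eval (xp ε) g * ∏ i, xp ε i ^ m0 i := by
      simp [hv _ (hcube _)]
    have expand : ∀ ε : σ → Bool, eval (xp ε) g * ∏ i, xp ε i ^ m0 i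
        = ∑ d ∈ g.support, coeff d g * ∏ i, xp ε i ^ (d i + m0 i) := by
      intro ε
      rw [eval_eq', Finset.sum_mul]
      refine Finset.sum_congr rfl fun d _ => ?_
      rw [mul_assoc, ← Finset.prod_mul_distrib]
      simp_rw [← pow_add]
    rw [Finset.sum_congr rfl (fun ε _ => expand ε), Finset.sum_comm] at key
    have inner : ∀ d ∈ g.support,
        ∑ ε : σ → Bool, coeff d g * ∏ i, xp ε i ^ (d i + m0 i)
          = if d = m0 then coeff d g * 2 ^ (Fintype.card σ) else 0 := by
      intro d hd
      have hswap : ∑ ε : σ → Bool, coeff d g * ∏ i, xp ε i ^ (d i + m0 i)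
          = coeff d g * ∑ ε : σ → Bool, ∏ i, ((fun b : Bool => (if b then (1:ℂ) else -1) ^ (d i + m0 i)) (ε i)) := by
        rw [Finset.mul_sum]
      have hps := Fintype.prod_sum (fun (i : σ) (b : Bool) => (if b then (1:ℂ) else -1) ^ (d i + m0 i))
      rw [hswap, ← hps]
      by_cases hdm : d = m0
      · subst hdm
        rw [if_pos rfl]
        have : ∀ i : σ, (∑ b : Bool, (if b then (1:ℂ) else -1) ^ (d i + d i)) = 2 := by
          intro i
          rw [Fintype.sum_bool]
          simp [Even.neg_one_pow ⟨d i, rfl⟩]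
          norm_num
        rw [Finset.prod_congr rfl fun i _ => this i]
        simp [Finset.prod_const]
      · rw [if_neg hdm]
        have : ∃ i, d i ≠ m0 i := by
          by_contra hcon
          push_neg at hcon
          exact hdm (Finsupp.ext hcon)
        obtain ⟨i, hi⟩ := this
        have hodd : Odd (d i + m0 i) := by
          have h1 := hml d hd i
          have h2 := hm0 i
          interval_cases h : d i <;> interval_cases h' : m0 i <;> simp_all <;> decide
        have hz : (∑ b : Bool, (if b then (1:ℂ) else -1) ^ (d i + m0 i)) = 0 := by
          rw [Fintype.sum_bool]
          simp [hodd.neg_one_pow]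
        rw [Finset.prod_eq_zero (Finset.mem_univ i) hz, mul_zero]
    rw [Finset.sum_congr rfl inner, Finset.sum_ite_eq' g.support m0
      (fun d => coeff d g * 2 ^ (Fintype.card σ))] at key
    by_cases hmem : m0 ∈ g.support
    · rw [if_pos hmem] at key
      have h2 : (2 : ℂ) ^ (Fintype.card σ) ≠ 0 := pow_ne_zero _ two_ne_zero
      field_simp at key
      exact (mul_eq_zero.mp key.symm).resolve_right h2
    · exact notMem_support_iff.mp hmem
  · push_neg at hm0
    obtain ⟨i, hi⟩ := hm0
    by_contra hco
    have := hml m0 (mem_support_iff.mpr hco) i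
    omega

lemma vanish_mem_cubeSpan (g : MvPolynomial σ ℂ)
    (hv : ∀ x : σ → ℂ, (∀ i, x i = 1 ∨ x i = -1) → eval x g = 0) :
    g ∈ cubeSpan σ := by
  classical
  let red : (σ →₀ ℕ) → (σ →₀ ℕ) := fun m => m.mapRange (· % 2) (Nat.zero_mod 2)
  let g' : MvPolynomial σ ℂ := ∑ m ∈ g.support, monomial (red m) (coeff m g)
  have hdiff : g - g' ∈ cubeSpan σ := by
    have hrepr : g - g' = ∑ m ∈ g.support,
        (monomial m (coeff m g) - monomial (red m) (coeff m g)) := by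
      rw [Finset.sum_sub_distrib]
      congr 1
      exact g.as_sum
    rw [hrepr]
    apply Ideal.sum_mem
    intro m hm
    have heq : monomial m (coeff m g) - monomial (red m) (coeff m g)
        = C (coeff m g) * ((∏ i, (X i : MvPolynomial σ ℂ) ^ m i) - ∏ i, X i ^ (red m i)) := by
      rw [mul_sub, ← monomial_eq_prod, ← monomial_eq_prod]
    rw [heq]
    refine Ideal.mul_mem_left _ _ ?_
    have : ∀ i : σ, red m i = m i % 2 := fun i => Finsupp.mapRange_apply
    simp_rw [this]
    exact prod_reduce m univ
  have hml : ∀ m ∈ g'.support, ∀ i, m i ≤ 1 := by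
    intro m hm i
    have := support_sum hm
    obtain ⟨m', _, hm'⟩ := Finset.mem_biUnion.mp this
    have hsub := support_monomial_subset hm'
    have : m = red m' := Finset.mem_singleton.mp hsub
    rw [this]
    have : red m' i = m' i % 2 := Finsupp.mapRange_apply
    rw [this]
    omega
  have hv' : ∀ x : σ → ℂ, (∀ i, x i = 1 ∨ x i = -1) → eval x g' = 0 := by
    intro x hx
    have h1 := eval_cubeSpan hx hdiff
    rw [map_sub] at h1
    rw [hv x hx] at h1
    linear_combination -h1
  have : g' = 0 := multilinear_eq_zero g' hml hv'
  rw [this, sub_zero] at hdiff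
  exact hdiff

end Cube

section Chi

/-- The character `ZMod 2 → ℂ`, sending `0 ↦ 1` and `1 ↦ -1`. -/
noncomputable def chi (a : ZMod 2) : ℂ := if a = 0 then 1 else -1

lemma chi_zero : chi 0 = 1 := if_pos rfl

lemma chi_one : chi 1 = -1 := if_neg (by decide)

lemma chi_cases (a : ZMod 2) : chi a = 1 ∨ chi a = -1 := by
  by_cases h : a = 0 <;> simp [chi, h]

lemma zmod2_cases (a : ZMod 2) : a = 0 ∨ a = 1 := by revert a; decide

lemma chi_add (a b : ZMod 2) : chi (a + b) = chi a * chi b := by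
  rcases zmod2_cases a with ha | ha <;> rcases zmod2_cases b with hb | hb <;>
    subst ha <;> subst hb <;>
    simp [chi_zero, chi_one, show (1 + 1 : ZMod 2) = 0 from by decide]

lemma chi_sum {ι : Type} (s : Finset ι) (f : ι → ZMod 2) :
    chi (∑ e ∈ s, f e) = ∏ e ∈ s, chi (f e) := by
  classical
  induction s using Finset.cons_induction with
  | empty => simpa using chi_zero
  | cons a s ha ih => rw [Finset.sum_cons, Finset.prod_cons, chi_add, ih]

end Chi

theorem nowhere_zero_four_flow_iff_not_mem_ideal {V E : Type} [Fintype V] [Fintype E]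
    [DecidableEq V] (ends : E → Sym2 V) :
    (∃ φ : E → ZMod 2 × ZMod 2, (∀ e, φ e ≠ 0) ∧
      ∀ v : V, ∑ e ∈ univ.filter (fun e => v ∈ ends e), φ e = 0) ↔
    fourFlowPoly ends ∉ fourFlowIdeal E := by
  classical
  constructor
  · rintro ⟨φ, hnz, hflow⟩ hmem
    set x : E ⊕ E → ℂ := Sum.elim (fun e => chi (φ e).1) (fun e => chi (φ e).2) with hx
    have hker : fourFlowIdeal E ≤ RingHom.ker (eval x) := by
      rw [fourFlowIdeal, Ideal.span_le]
      rintro p ((⟨e, rfl⟩ | ⟨e, rfl⟩) | ⟨e, rfl⟩) <;>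
        simp only [SetLike.mem_coe, RingHom.mem_ker, map_sub, map_mul, map_add, map_pow,
          map_one, eval_X, hx, Sum.elim_inl, Sum.elim_inr]
      · rcases chi_cases (φ e).1 with h | h <;> rw [h] <;> ring
      · rcases chi_cases (φ e).2 with h | h <;> rw [h] <;> ring
      · have hone : (φ e).1 = 1 ∨ (φ e).2 = 1 := by
          rcases zmod2_cases (φ e).1 with h1 | h1
          · rcases zmod2_cases (φ e).2 with h2 | h2
            · exact absurd (Prod.ext h1 h2) (hnz e)
            · exact Or.inr h2
          · exact Or.inl h1
        rcases hone with h | h <;> rw [h, chi_one] <;> ring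
    have h0 : eval x (fourFlowPoly ends) = 0 := hker hmem
    have hc : eval x (fourFlowPoly ends) = ∏ _v : V, (4 : ℂ) := by
      simp only [fourFlowPoly, map_prod, map_mul, map_add, map_one, eval_X, hx,
        Sum.elim_inl, Sum.elim_inr]
      refine Finset.prod_congr rfl fun v _ => ?_
      have h1 : ∑ e ∈ univ.filter (fun e => v ∈ ends e), (φ e).1 = 0 := by
        rw [← Prod.fst_sum, hflow v]; rfl
      have h2 : ∑ e ∈ univ.filter (fun e => v ∈ ends e), (φ e).2 = 0 := by
        rw [← Prod.snd_sum, hflow v]; rfl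
      rw [← chi_sum, ← chi_sum, h1, h2, chi_zero]
      norm_num
    rw [hc, Finset.prod_const] at h0
    exact pow_ne_zero _ (by norm_num : (4 : ℂ) ≠ 0) h0
  · intro hnm
    by_contra hne
    push_neg at hne
    apply hnm
    set w : E → MvPolynomial (E ⊕ E) ℂ := fun e =>
      C (1/4 : ℂ) * ((X (Sum.inl e) + 1) * (X (Sum.inr e) + 1)) with hwdef
    have hw : ∀ e, w e ∈ fourFlowIdeal E :=
      fun e => Ideal.mul_mem_left _ _ (Ideal.subset_span (Or.inr ⟨e, rfl⟩))
    have hprod : ∀ s : Finset E, (∏ e ∈ s, (1 - w e)) - 1 ∈ fourFlowIdeal E := by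
      intro s
      induction s using Finset.cons_induction with
      | empty => simpa using Ideal.zero_mem _
      | cons a s ha ih =>
          rw [Finset.prod_cons]
          have heq : (1 - w a) * (∏ e ∈ s, (1 - w e)) - 1
              = ((∏ e ∈ s, (1 - w e)) - 1) - w a * ∏ e ∈ s, (1 - w e) := by ring
          rw [heq]
          exact sub_mem ih (Ideal.mul_mem_right _ _ (hw a))
    have hcube_le : cubeSpan (E ⊕ E) ≤ fourFlowIdeal E := by
      rw [cubeSpan, Ideal.span_le]
      rintro _ ⟨s, rfl⟩
      rcases s with e | e
      · exact Ideal.subset_span (Or.inl (Or.inl ⟨e, rfl⟩))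
      · exact Ideal.subset_span (Or.inl (Or.inr ⟨e, rfl⟩))
    have hg : fourFlowPoly ends * ∏ e : E, (1 - w e) ∈ cubeSpan (E ⊕ E) := by
      apply vanish_mem_cubeSpan
      intro x hx
      rw [map_mul]
      by_cases hbad : ∃ e, x (Sum.inl e) = 1 ∧ x (Sum.inr e) = 1
      · obtain ⟨e, he1, he2⟩ := hbad
        have hz : eval x (1 - w e) = 0 := by
          simp only [hwdef, map_sub, map_mul, map_add, map_one, eval_X, eval_C, he1, he2]
          norm_num
        rw [map_prod, Finset.prod_eq_zero (Finset.mem_univ e) hz, mul_zero]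
      · push_neg at hbad
        set φ : E → ZMod 2 × ZMod 2 := fun e =>
          ((if x (Sum.inl e) = 1 then 0 else 1), (if x (Sum.inr e) = 1 then 0 else 1)) with hφdef
        have hφx1 : ∀ e, x (Sum.inl e) = chi (φ e).1 := by
          intro e
          rcases hx (Sum.inl e) with h | h
          · simp [hφdef, h, chi_zero]
          · have hne1 : ((-1 : ℂ)) ≠ 1 := by norm_num
            simp [hφdef, h, hne1, chi_one]
        have hφx2 : ∀ e, x (Sum.inr e) = chi (φ e).2 := by
          intro e
          rcases hx (Sum.inr e) with h | h
          · simp [hφdef, h, chi_zero]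
          · have hne1 : ((-1 : ℂ)) ≠ 1 := by norm_num
            simp [hφdef, h, hne1, chi_one]
        have hφnz : ∀ e, φ e ≠ 0 := by
          intro e h0
          have h1 : (φ e).1 = 0 := by rw [h0]; rfl
          have h2 : (φ e).2 = 0 := by rw [h0]; rfl
          have hx1 : x (Sum.inl e) = 1 := by
            by_contra hc
            have h1' : (φ e).1 = 1 := by simp [hφdef, hc]
            rw [h1'] at h1
            exact one_ne_zero h1
          have hx2 : x (Sum.inr e) = 1 := by
            by_contra hc
            have h2' : (φ e).2 = 1 := by simp [hφdef, hc]
            rw [h2'] at h2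
            exact one_ne_zero h2
          exact hbad e hx1 hx2
        obtain ⟨v, hv⟩ := hne φ hφnz
        have hor : (∑ e ∈ univ.filter (fun e => v ∈ ends e), (φ e).1) ≠ 0 ∨
            (∑ e ∈ univ.filter (fun e => v ∈ ends e), (φ e).2) ≠ 0 := by
          by_contra hcon
          push_neg at hcon
          exact hv (Prod.ext (by rw [Prod.fst_sum]; exact hcon.1)
            (by rw [Prod.snd_sum]; exact hcon.2))
        have hf0 : eval x (fourFlowPoly ends) = 0 := by
          simp only [fourFlowPoly, map_prod, map_mul, map_add, map_one, eval_X]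
          apply Finset.prod_eq_zero (Finset.mem_univ v)
          have hone : ∀ a : ZMod 2, a ≠ 0 → chi a = -1 := by
            intro a ha
            rcases zmod2_cases a with h | h
            · exact absurd h ha
            · rw [h, chi_one]
          rcases hor with h | h
          · have hp : ∏ e ∈ univ.filter (fun e => v ∈ ends e), x (Sum.inl e) = -1 := by
              rw [Finset.prod_congr rfl fun e _ => hφx1 e, ← chi_sum, hone _ h]
            rw [hp]
            ring
          · have hp : ∏ e ∈ univ.filter (fun e => v ∈ ends e), x (Sum.inr e) = -1 := by
              rw [Finset.prod_congr rfl fun e _ => hφx2 e, ← chi_sum, hone _ h]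
            rw [hp]
            ring
        rw [hf0, zero_mul]
    have hmain := hcube_le hg
    have hsub := Ideal.mul_mem_left _ (fourFlowPoly ends) (hprod univ)
    have hfin : fourFlowPoly ends = fourFlowPoly ends * ∏ e : E, (1 - w e)
        - fourFlowPoly ends * ((∏ e : E, (1 - w e)) - 1) := by ring
    rw [hfin]
    exact sub_mem hmain hsub
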